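/- Let 0 < p < 1, c > 0, and λ = 1 + c·p/(1−p). Define π₀ = (1+(c−1)p)/(1−p+c) and, for k ≥ 1, π_k = (λ/(λ+k+c))·∏_{j=0}^{k−1} (j+c)/(λ+j+c). Then ∑_{k=0}^∞ π_k = 1. -/

import Mathlib

theorem pi_sums_to_one (p c lam : ℝ) (hp : 0 < p) (hp1 : p < 1) (hc : 0 < c)
    (hlam : lam = 1 + c * p / (1 - p)) (π : ℕ → ℝ)
    (hπ0 : π 0 = (1 + (c - 1) * p) / (1 - p + c))
    (hπ : ∀ k : ℕ, 1 ≤ k →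
      π k = lam / (lam + k + c) * ∏ j ∈ Finset.range k, ((j : ℝ) + c) / (lam + j + c)) :
    HasSum π 1 := by
  have hp' : (0:ℝ) < 1 - p := by linarith
  have hlam1 : 1 < lam := by
    have : 0 < c * p / (1 - p) := by positivity
    rw [hlam]; linarith
  set Q : ℕ → ℝ := fun n => ∏ j ∈ Finset.range n, ((j : ℝ) + c) / (lam + j + c) with hQ
  have hden : ∀ n : ℕ, (0:ℝ) < lam + n + c := by
    intro n
    have : (0:ℝ) ≤ n := Nat.cast_nonneg n
    linarith
  have hQsucc : ∀ n, Q (n+1) = Q n * (((n:ℝ) + c) / (lam + n + c)) := by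
    intro n; simp [hQ, Finset.prod_range_succ, div_mul_div_comm]
  have hQnonneg : ∀ n, 0 ≤ Q n := by
    intro n
    refine Finset.prod_nonneg fun j _ => div_nonneg ?_ (le_of_lt (hden j))
    have : (0:ℝ) ≤ j := Nat.cast_nonneg j
    linarith
  have hkey : ∀ k, π k = Q k - Q (k+1) := by
    intro k
    rcases Nat.eq_zero_or_pos k with hk | hk
    · subst hk
      rw [hπ0]
      have h1 : Q 0 = 1 := by simp [hQ]
      have h2 : Q 1 = c / (lam + c) := by
        simp [hQsucc 0, h1]
      rw [h1, h2, hlam]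
      have h3 : (1:ℝ) - p ≠ 0 := ne_of_gt hp'
      have h4 : (1:ℝ) - p + c ≠ 0 := by positivity
      have h5 : 1 + c * p / (1 - p) + c ≠ 0 := by
        have := hden 0; rw [hlam] at this; push_cast at this; intro h; nlinarith
      field_simp
      ring
    · rw [hπ k hk, hQsucc k]
      have h := ne_of_gt (hden k)
      have h2 : (1:ℝ) - ((k:ℝ) + c) / (lam + k + c) = lam / (lam + k + c) := by
        field_simp
        ring
      calc lam / (lam + k + c) * Q k
          = Q k * (1 - ((k:ℝ) + c) / (lam + k + c)) := by rw [h2]; ring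
        _ = Q k - Q k * (((k:ℝ) + c) / (lam + k + c)) := by ring
  have hπnonneg : ∀ k, 0 ≤ π k := by
    intro k
    rw [hkey k, hQsucc k]
    have hfac : ((k:ℝ) + c) / (lam + k + c) ≤ 1 := by
      rw [div_le_one (hden k)]; linarith
    nlinarith [hQnonneg k]
  have hbound : ∀ n : ℕ, Q n ≤ c / (n + c) := by
    intro n
    induction n with
    | zero => simp [hQ, div_self (ne_of_gt hc)]
    | succ n ih =>
      rw [hQsucc]
      have hnc : (0:ℝ) < (n:ℝ) + c := by
        have : (0:ℝ) ≤ n := Nat.cast_nonneg n; linarith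
      have h1 : Q n * (((n:ℝ) + c) / (lam + n + c)) ≤
          (c / ((n:ℝ) + c)) * (((n:ℝ) + c) / (lam + n + c)) := by
        exact mul_le_mul_of_nonneg_right ih (div_nonneg (le_of_lt hnc) (le_of_lt (hden n)))
      have h2 : (c / ((n:ℝ) + c)) * (((n:ℝ) + c) / (lam + n + c)) = c / (lam + n + c) := by
        field_simp
      have h3 : c / (lam + n + c) ≤ c / (((n:ℕ)+1 : ℝ) + c) := by
        apply div_le_div_of_nonneg_left (le_of_lt hc) (by linarith [Nat.cast_nonneg (α := ℝ) n])
        linarith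
      push_cast
      push_cast at h3
      linarith
  have hQ0 : Filter.Tendsto Q Filter.atTop (nhds 0) := by
    have htop : Filter.Tendsto (fun n : ℕ => (n:ℝ) + c) Filter.atTop Filter.atTop :=
      Filter.tendsto_atTop_add_const_right _ c tendsto_natCast_atTop_atTop
    have hcn : Filter.Tendsto (fun n : ℕ => c / ((n:ℝ) + c)) Filter.atTop (nhds 0) :=
      Filter.Tendsto.div_atTop tendsto_const_nhds htop
    exact squeeze_zero hQnonneg hbound hcn
  rw [hasSum_iff_tendsto_nat_of_nonneg hπnonneg]
  have hsum : ∀ n, ∑ k ∈ Finset.range n, π k = 1 - Q n := by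
    intro n
    have h1 : Q 0 = 1 := by simp [hQ]
    calc ∑ k ∈ Finset.range n, π k = ∑ k ∈ Finset.range n, (Q k - Q (k+1)) := by
          exact Finset.sum_congr rfl fun k _ => hkey k
      _ = Q 0 - Q n := Finset.sum_range_sub' Q n
      _ = 1 - Q n := by rw [h1]
    
  simp only [hsum]
  have := Filter.Tendsto.sub (tendsto_const_nhds (x := (1:ℝ))) hQ0
  simpa using this
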